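/- Let I and V be metric spaces and let A : I → Set V be a correspondence such that: (a) each A(i) is nonempty and compact; (b) A is upper semicontinuous, i.e. the graph {(i,a) ∈ I × V : a ∈ A(i)} is closed in I × V; (c) A is lower semicontinuous, i.e. for every open U ⊆ V the set {i ∈ I : A(i) ∩ U ≠ ∅} is open; and (d) the image of any compact subset of I is contained in a compact subset of V. Let J : V → ℝ be lower semicontinuous, suppose the function i ↦ min_{a ∈ A(i)} J(a) is continuous on I, and suppose that for every i ∈ I there is exactly one point b(i) ∈ A(i) minimizing J over A(i). Then the selection map b : I → V is continuous. -/

import Mathlib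

/-- Continuity of the (unique) best-response selection: if the correspondence `A` is
continuous with nonempty compact values, maps compacts into compacts, `J` is lower
semicontinuous, the minimum-value function is continuous, and each `A i` has exactly one
minimizer `b i` of `J`, then the selection `b` is continuous. -/
theorem best_response_selection_continuous
    {I V : Type*} [MetricSpace I] [MetricSpace V]
    (A : I → Set V)
    (hne : ∀ i, (A i).Nonempty)
    (hcpt : ∀ i, IsCompact (A i))
    (husc : IsClosed {p : I × V | p.2 ∈ A p.1})
    (hlsc : ∀ U : Set V, IsOpen U → IsOpen {i : I | (A i ∩ U).Nonempty})
    (himg : ∀ K : Set I, IsCompact K → ∃ K' : Set V, IsCompact K' ∧ (⋃ i ∈ K, A i) ⊆ K')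
    (J : V → ℝ) (hJ : LowerSemicontinuous J)
    (hMin : Continuous fun i => sInf (J '' A i))
    (b : I → V)
    (hb : ∀ i, b i ∈ A i ∧ ∀ a ∈ A i, J (b i) ≤ J a)
    (huniq : ∀ i, ∀ a ∈ A i, (∀ a' ∈ A i, J a ≤ J a') → a = b i) :
    Continuous b := by
  have hbeq : ∀ j, J (b j) = sInf (J '' A j) := by
    intro j
    have hL : IsLeast (J '' A j) (J (b j)) := by
      refine ⟨⟨b j, (hb j).1, rfl⟩, ?_⟩
      rintro y ⟨a, ha, rfl⟩
      exact (hb j).2 a ha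
    exact hL.csInf_eq.symm
  rw [continuous_iff_seqContinuous]
  intro x i hx
  obtain ⟨K', hK', hsub⟩ := himg (insert i (Set.range x)) hx.isCompact_insert_range
  apply Filter.tendsto_of_subseq_tendsto
  intro ns hns
  have hxns : Filter.Tendsto (fun n => x (ns n)) Filter.atTop (nhds i) :=
    hx.comp hns
  have hmem : ∀ n, b (x (ns n)) ∈ K' := fun n =>
    hsub (Set.mem_biUnion (Set.mem_insert_of_mem _ (Set.mem_range_self _)) (hb _).1)
  obtain ⟨v, hvK, φ, hφ, hvt⟩ := hK'.tendsto_subseq hmem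
  have hvt' : Filter.Tendsto (fun n => b (x (ns (φ n)))) Filter.atTop (nhds v) := hvt
  refine ⟨φ, ?_⟩
  have hxt : Filter.Tendsto (fun n => x (ns (φ n))) Filter.atTop (nhds i) :=
    hxns.comp hφ.tendsto_atTop
  have hvA : v ∈ A i := by
    have : (i, v) ∈ {p : I × V | p.2 ∈ A p.1} :=
      husc.mem_of_tendsto (hxt.prodMk_nhds hvt')
        (Filter.Eventually.of_forall fun n => (hb _).1)
    exact this
  have hm : Filter.Tendsto (fun n => J (b (x (ns (φ n))))) Filter.atTop
      (nhds (sInf (J '' A i))) := by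
    have := (hMin.tendsto i).comp hxt
    simpa [Function.comp_def, hbeq] using this
  have hJv : J v ≤ sInf (J '' A i) := by
    by_contra h
    push_neg at h
    obtain ⟨y, hy1, hy2⟩ := exists_between h
    have hev : ∀ᶠ n in Filter.atTop, y < J (b (x (ns (φ n)))) :=
      hvt'.eventually (hJ v y hy2)
    have : y ≤ sInf (J '' A i) :=
      ge_of_tendsto hm (hev.mono fun n h => h.le)
    exact absurd this (not_le.mpr hy1)
  have hveq : v = b i := by
    refine huniq i v hvA fun a ha => ?_
    refine hJv.trans ?_
    rw [← hbeq i]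
    exact (hb i).2 a ha
  rw [← hveq]
  exact hvt'
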